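/- For positive integers m and M, D(⟦−m, M⟧) = M + m + o(min(m, M)) as min(m, M) → +∞; that is, for every ε > 0 there exists N such that for all positive integers m, M with min(m, M) ≥ N one has M + m − ε·min(m, M) ≤ D(⟦−m, M⟧) ≤ M + m. -/

import Mathlib

/-- A minimal zero-sum sequence over `X`: a non-empty multiset of elements of `X`
whose sum is `0` and such that no non-empty proper sub-multiset has sum `0`. -/
def IsMinZeroSumSeq {G : Type*} [AddCommGroup G] (X : Set G) (s : Multiset G) : Prop :=
  s ≠ 0 ∧ (∀ x ∈ s, x ∈ X) ∧ s.sum = 0 ∧ ∀ t < s, t ≠ 0 → t.sum ≠ 0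

/-- The Davenport constant of a subset `X` of an abelian group: the supremum of the
lengths of minimal zero-sum sequences over `X` (0 if there are none). -/
noncomputable def davenport {G : Type*} [AddCommGroup G] (X : Set G) : ℕ∞ :=
  ⨆ (s : Multiset G) (_ : IsMinZeroSumSeq X s), (Multiset.card s : ℕ∞)


lemma greedy_order (m M : ℕ) (hm : 0 < m) (hM : 0 < M) :
    ∀ n (s : Multiset ℤ), s.card = n →
      (∀ x ∈ s, -(m:ℤ) ≤ x ∧ x ≤ M ∧ x ≠ 0) →
      (1 - (m:ℤ) ≤ -s.sum) → (-s.sum ≤ M) →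
      ∃ L : List ℤ, (L : Multiset ℤ) = s ∧
        ∀ i, 1 ≤ i → i ≤ L.length →
          1 - (m:ℤ) ≤ -s.sum + (L.take i).sum ∧ -s.sum + (L.take i).sum ≤ M := by
  intro n
  induction n with
  | zero =>
    intro s hcard _ _ _
    refine ⟨[], by simpa using (Multiset.card_eq_zero.mp hcard).symm, ?_⟩
    intro i h1 h2
    simp at h2; omega
  | succ n ih =>
    intro s hcard hmem hlo hhi
    have hcardpos : 0 < s.card := by rw [hcard]; omega
    -- pick an element x of the right sign
    have hx : ∃ x ∈ s, (0 ≤ s.sum → 0 < x) ∧ (s.sum < 0 → x < 0) := by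
      rcases le_or_gt 0 s.sum with hc | hc
      · have hex : ∃ x ∈ s, 0 < x := by
          by_contra hall
          push_neg at hall
          have hle : ∀ x ∈ s, x ≤ -1 := by
            intro x hxs
            have h1 := (hmem x hxs).2.2
            have h2 := hall x hxs
            omega
          have h3 := Multiset.sum_le_card_nsmul s (-1) hle
          simp only [nsmul_eq_mul, mul_neg_one] at h3
          omega
        obtain ⟨x, hxs, hxpos⟩ := hex
        exact ⟨x, hxs, fun _ => hxpos, fun h => absurd hc (not_le.mpr h)⟩
      · have hex : ∃ x ∈ s, x < 0 := by
          by_contra hall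
          push_neg at hall
          have hle : ∀ x ∈ s, 1 ≤ x := by
            intro x hxs
            have h1 := (hmem x hxs).1
            have h2 := hall x hxs
            have h3 := (hmem x hxs).2.2
            omega
          have h3 := Multiset.card_nsmul_le_sum hle
          simp only [nsmul_eq_mul, mul_one] at h3
          omega
        obtain ⟨x, hxs, hxneg⟩ := hex
        exact ⟨x, hxs, fun h => absurd hc (not_lt.mpr h), fun _ => hxneg⟩
    obtain ⟨x, hxs, hpos, hneg⟩ := hx
    have hxlo := (hmem x hxs).1
    have hxhi := (hmem x hxs).2.1
    set s' := s.erase x with hs'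
    have hcons : x ::ₘ s' = s := Multiset.cons_erase hxs
    have hsum' : s'.sum = s.sum - x := by
      have : (x ::ₘ s').sum = s.sum := by rw [hcons]
      rw [Multiset.sum_cons] at this
      omega
    have hcard' : s'.card = n := by
      have : (x ::ₘ s').card = s.card := by rw [hcons]
      rw [Multiset.card_cons] at this
      omega
    have hmem' : ∀ y ∈ s', -(m:ℤ) ≤ y ∧ y ≤ M ∧ y ≠ 0 := by
      intro y hy
      exact hmem y (Multiset.mem_of_mem_erase hy)
    have hinv : 1 - (m:ℤ) ≤ -s'.sum ∧ -s'.sum ≤ M := by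
      rcases le_or_gt 0 s.sum with hc | hc
      · have hxp := hpos hc
        constructor <;> [omega; omega]
      · have hxn := hneg hc
        constructor <;> [omega; omega]
    obtain ⟨L', hL'eq, hL'⟩ := ih s' hcard' hmem' hinv.1 hinv.2
    refine ⟨x :: L', ?_, ?_⟩
    · rw [← hcons]
      simpa using congrArg (x ::ₘ ·) hL'eq
    · intro i h1 h2
      rcases Nat.lt_or_ge i 2 with hi | hi
      · interval_cases i
        simp only [List.take_cons, List.take_zero, List.sum_cons, List.sum_nil, add_zero,
          List.take_succ_cons]
        constructor <;> omega
      · obtain ⟨j, rfl⟩ : ∃ j, i = j + 1 := ⟨i - 1, by omega⟩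
        have hj1 : 1 ≤ j := by omega
        have hj2 : j ≤ L'.length := by simp at h2; omega
        have := hL' j hj1 hj2
        simp only [List.take_succ_cons, List.sum_cons]
        constructor <;> omega

lemma card_le_of_min (m M : ℕ) (hm : 0 < m) (hM : 0 < M) (s : Multiset ℤ)
    (h : IsMinZeroSumSeq (Set.Icc (-(m:ℤ)) M) s) : s.card ≤ M + m := by
  obtain ⟨hne, hmem, hsum, hmin⟩ := h
  by_cases h0 : (0:ℤ) ∈ s
  · -- s = {0}
    have hle : ({0} : Multiset ℤ) ≤ s := Multiset.singleton_le.mpr h0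
    have : s = {0} := by
      by_contra hne'
      have hlt : ({0} : Multiset ℤ) < s := lt_of_le_of_ne hle (Ne.symm hne')
      exact hmin {0} hlt (by simp) (by simp)
    rw [this]
    simp
    omega
  · have hmem' : ∀ x ∈ s, -(m:ℤ) ≤ x ∧ x ≤ M ∧ x ≠ 0 := by
      intro x hxs
      have := hmem x hxs
      rw [Set.mem_Icc] at this
      exact ⟨this.1, this.2, fun hx => h0 (hx ▸ hxs)⟩
    obtain ⟨L, hLeq, hL⟩ := greedy_order m M hm hM s.card s rfl hmem'
      (by rw [hsum]; push_cast; omega) (by rw [hsum]; push_cast; omega)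
    have hlen : L.length = s.card := by
      rw [← hLeq]; simp
    set f : ℕ → ℤ := fun i => (L.take (i+1)).sum with hf
    have hmaps : ∀ i ∈ Finset.range L.length, f i ∈ Finset.Icc (1-(m:ℤ)) M := by
      intro i hi
      rw [Finset.mem_range] at hi
      have := hL (i+1) (by omega) (by omega)
      rw [hsum] at this
      simp only [neg_zero, zero_add] at this
      rw [Finset.mem_Icc]
      exact this
    have key : ∀ i j, i < j → j < L.length → f i ≠ f j := by
      intro i j hij hj hfe
      set chunk := (L.take (j+1)).drop (i+1) with hchunk
      have htt : (L.take (j+1)).take (i+1) = L.take (i+1) := by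
        rw [List.take_take]
        congr 1
        omega
      have htake : L.take (i+1) ++ chunk = L.take (j+1) := by
        rw [← htt, hchunk, List.take_append_drop]
      have hcsum : chunk.sum = 0 := by
        have : (L.take (i+1)).sum + chunk.sum = (L.take (j+1)).sum := by
          rw [← List.sum_append, htake]
        have hfi : (L.take (i+1)).sum = f i := rfl
        have hfj : (L.take (j+1)).sum = f j := rfl
        omega
      have hclen : chunk.length = j - i := by
        rw [hchunk, List.length_drop, List.length_take]
        omega
      have hinfix : chunk <:+: L := by
        refine ⟨L.take (i+1), L.drop (j+1), ?_⟩
        rw [htake, List.take_append_drop]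
      have hle2 : (chunk : Multiset ℤ) ≤ s := by
        rw [← hLeq, Multiset.coe_le]
        exact hinfix.sublist.subperm
      have hcard2 : Multiset.card (chunk : Multiset ℤ) = j - i := by
        simpa using hclen
      have hlt : (chunk : Multiset ℤ) < s := by
        refine lt_of_le_of_ne hle2 ?_
        intro he
        rw [he] at hcard2
        omega
      refine hmin (chunk : Multiset ℤ) hlt ?_ ?_
      · intro he
        rw [he] at hcard2
        simp at hcard2
        omega
      · simpa using hcsum
    have hinj : Set.InjOn f (Finset.range L.length) := by
      intro i hi j hj hfe
      simp only [Finset.coe_range, Set.mem_Iio] at hi hj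
      by_contra hne'
      rcases Nat.lt_or_ge i j with hij | hij
      · exact key i j hij hj hfe
      · exact key j i (by omega) hi hfe.symm
    have := Finset.card_le_card_of_injOn f hmaps hinj
    rw [Finset.card_range, Int.card_Icc] at this
    rw [← hlen]
    have : L.length ≤ ((M:ℤ) + 1 - (1 - m)).toNat := this
    omega

lemma min_construction (m M a b : ℕ) (ha1 : 1 ≤ a) (hb1 : 1 ≤ b) (haM : a ≤ M) (hbm : b ≤ m)
    (hco : Nat.Coprime a b) :
    IsMinZeroSumSeq (Set.Icc (-(m:ℤ)) M)
      (Multiset.replicate b (a:ℤ) + Multiset.replicate a (-(b:ℤ))) := by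
  set s := Multiset.replicate b (a:ℤ) + Multiset.replicate a (-(b:ℤ)) with hs
  have hab : (a:ℤ) ≠ -(b:ℤ) := by omega
  refine ⟨?_, ?_, ?_, ?_⟩
  · intro h
    have : Multiset.card s = b + a := by simp [hs]
    rw [h] at this
    simp at this
    omega
  · intro x hx
    rw [hs, Multiset.mem_add, Multiset.mem_replicate, Multiset.mem_replicate] at hx
    rcases hx with ⟨-, rfl⟩ | ⟨-, rfl⟩ <;> rw [Set.mem_Icc] <;> constructor <;> push_cast <;> omega
  · rw [hs]
    simp [Multiset.sum_replicate]
    ring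
  · intro t hlt htne hsum
    set i := t.count (a:ℤ) with hi
    set j := t.count (-(b:ℤ)) with hj
    have hle := le_of_lt hlt
    have hmemt : ∀ x ∈ t, x = (a:ℤ) ∨ x = -(b:ℤ) := by
      intro x hx
      have := Multiset.mem_of_le hle hx
      rw [hs, Multiset.mem_add, Multiset.mem_replicate, Multiset.mem_replicate] at this
      tauto
    have ht : t = Multiset.replicate i (a:ℤ) + Multiset.replicate j (-(b:ℤ)) := by
      ext x
      rw [Multiset.count_add, Multiset.count_replicate, Multiset.count_replicate]
      by_cases hxa : x = (a:ℤ)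
      · subst hxa
        rw [if_pos rfl, if_neg hab.symm]  -- careful direction
        omega
      · by_cases hxb : x = -(b:ℤ)
        · subst hxb
          rw [if_neg (Ne.symm ?_), if_pos rfl]
          · omega
          · exact fun h => hxa h
        · rw [if_neg (Ne.symm hxa), if_neg (Ne.symm hxb)]
          have : x ∉ t := fun hx => by rcases hmemt x hx with h | h <;> [exact hxa h; exact hxb h]
          simp [Multiset.count_eq_zero_of_notMem this]
    have hib : i ≤ b := by
      have := Multiset.count_le_of_le (a:ℤ) hle
      rw [hs, Multiset.count_add, Multiset.count_replicate, Multiset.count_replicate,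
        if_pos rfl, if_neg (Ne.symm hab)] at this
      omega
    have hja : j ≤ a := by
      have := Multiset.count_le_of_le (-(b:ℤ)) hle
      rw [hs, Multiset.count_add, Multiset.count_replicate, Multiset.count_replicate,
        if_neg hab, if_pos rfl] at this
      omega
    have hsum2 : (i:ℤ) * a - (j:ℤ) * b = 0 := by
      rw [ht] at hsum
      simp [Multiset.sum_replicate] at hsum
      push_cast at hsum ⊢
      linarith
    have hnat : i * a = j * b := by
      have : (i * a : ℤ) = (j * b : ℤ) := by push_cast; linarith
      exact_mod_cast this
    have hadvd : a ∣ j * b := ⟨i, by linarith [hnat]⟩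
    have haj : a ∣ j := (Nat.Coprime.dvd_of_dvd_mul_right hco) hadvd
    rcases Nat.eq_zero_or_pos j with hj0 | hjpos
    · have hi0 : i = 0 := by
        rw [hj0] at hnat
        simp at hnat
        omega
      apply htne
      rw [ht, hi0, hj0]
      simp
    · have hja' : j = a := Nat.le_antisymm hja (Nat.le_of_dvd hjpos haj)
      have hi' : i = b := by
        have h1 : i * a = b * a := by rw [hnat, hja']; ring
        exact Nat.eq_of_mul_eq_mul_right (by omega : 0 < a) h1
      have : t = s := by rw [ht, hi', hja']
      exact absurd this (ne_of_lt hlt)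

lemma sum_inv_le_two_sqrt (n : ℕ) :
    ∑ d ∈ Finset.Icc 1 n, (1:ℝ)/d ≤ 2 * Real.sqrt n := by
  induction n with
  | zero => simp
  | succ n ih =>
    rw [Finset.sum_Icc_succ_top (by omega)]
    have h1 : Real.sqrt n ≤ Real.sqrt (n+1) := by
      apply Real.sqrt_le_sqrt; push_cast; linarith
    have h2 : Real.sqrt n * Real.sqrt n = n := Real.mul_self_sqrt (by positivity)
    have h3 : Real.sqrt (n+1) * Real.sqrt (n+1) = (n+1:ℝ) := Real.mul_self_sqrt (by positivity)
    have h4 : (1:ℝ) ≤ Real.sqrt (n+1) := by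
      rw [Real.one_le_sqrt]; push_cast; linarith
    have h5 : (0:ℝ) ≤ Real.sqrt n := Real.sqrt_nonneg _
    have key : (1:ℝ)/(n+1) ≤ 2 * Real.sqrt (n+1) - 2 * Real.sqrt n := by
      rw [div_le_iff₀ (by positivity)]
      nlinarith
    push_cast
    push_cast at ih
    linarith

lemma sum_inv_sq_le (n : ℕ) :
    ∑ d ∈ Finset.Icc 2 n, (1:ℝ)/(d:ℝ)^2 ≤ 3/4 := by
  have key : ∀ n : ℕ, 2 ≤ n → ∑ d ∈ Finset.Icc 3 n, (1:ℝ)/(d:ℝ)^2 ≤ 1/2 - 1/n := by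
    intro n hn
    induction n with
    | zero => omega
    | succ n ih =>
      rcases Nat.lt_or_ge n 2 with h2 | h2
      · interval_cases n
        · omega
        · norm_num
      · rw [Finset.sum_Icc_succ_top (by omega)]
        have hn0 : (0:ℝ) < n := by
          have : (2:ℝ) ≤ n := by exact_mod_cast h2
          linarith
        have hlast : (1:ℝ)/((n:ℝ)+1)^2 ≤ 1/n - 1/(n+1) := by
          have e1 : (1:ℝ)/n - 1/(n+1) = 1/(n*(n+1)) := by
            field_simp
            ring
          rw [e1]
          apply one_div_le_one_div_of_le (by positivity)
          nlinarith
        have := ih h2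
        push_cast
        push_cast at this
        linarith [hlast]
  rcases Nat.lt_or_ge n 2 with h2 | h2
  · interval_cases n <;> norm_num
  · have h3 : Finset.Icc 2 n = insert 2 (Finset.Icc 3 n) := by
      ext x
      simp only [Finset.mem_Icc, Finset.mem_insert]
      omega
    rw [h3, Finset.sum_insert (by simp)]
    have hn0 : (0:ℝ) < n := by
      have : (2:ℝ) ≤ n := by exact_mod_cast h2
      linarith
    have hpos : (0:ℝ) < 1/n := by positivity
    have := key n h2
    push_cast at this ⊢
    linarith

lemma count_dvd_le (x k d : ℕ) (hd : 0 < d) :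
    ({ y ∈ Finset.Icc (x+1) (x+k) | d ∣ y } : Finset ℕ).card ≤ k / d + 1 := by
  have h1 : Finset.Icc (x+1) (x+k) = Finset.Ioc x (x+k) := by
    ext y; simp only [Finset.mem_Icc, Finset.mem_Ioc]; omega
  have h2 : Finset.Ioc 0 x ∪ Finset.Ioc x (x+k) = Finset.Ioc 0 (x+k) :=
    Finset.Ioc_union_Ioc_eq_Ioc (Nat.zero_le x) (Nat.le_add_right x k)
  have hdisj : Disjoint (Finset.Ioc 0 x) (Finset.Ioc x (x+k)) := by
    rw [Finset.disjoint_left]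
    intro y hy hy'
    simp only [Finset.mem_Ioc] at hy hy'
    omega
  have h3 : ({ y ∈ Finset.Ioc 0 x | d ∣ y } : Finset ℕ).card
      + ({ y ∈ Finset.Ioc x (x+k) | d ∣ y } : Finset ℕ).card
      = ({ y ∈ Finset.Ioc 0 (x+k) | d ∣ y } : Finset ℕ).card := by
    rw [← Finset.card_union_of_disjoint (Finset.disjoint_filter_filter hdisj),
      ← Finset.filter_union, h2]
  rw [Nat.Ioc_filter_dvd_card_eq_div, Nat.Ioc_filter_dvd_card_eq_div] at h3
  rw [h1]
  have h4 : (x + k) / d ≤ x / d + k / d + 1 := by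
    rw [Nat.add_div hd]
    have := Nat.mod_lt x hd
    have := Nat.mod_lt k hd
    split <;> omega
  omega

lemma exists_coprime_pair (m M k μ : ℕ) (hμ : μ = min m M) (hkm : k ≤ m) (hkM : k ≤ M)
    (hk : 0 < k)
    (hbig : 16*(k:ℝ)*Real.sqrt μ + 4*(μ:ℝ) < (k:ℝ)^2) :
    ∃ a b : ℕ, M < a + k ∧ a ≤ M ∧ m < b + k ∧ b ≤ m ∧ Nat.Coprime a b := by
  by_contra hcon
  push_neg at hcon
  have hsub : Finset.Icc (M-k+1) M ×ˢ Finset.Icc (m-k+1) m ⊆ (Finset.Icc 2 μ).biUnion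
      (fun d => ({a ∈ Finset.Icc (M-k+1) M | d ∣ a} ×ˢ {b ∈ Finset.Icc (m-k+1) m | d ∣ b})) := by
    intro p hp
    rw [Finset.mem_product, Finset.mem_Icc, Finset.mem_Icc] at hp
    obtain ⟨hpa, hpb⟩ := hp
    have hnc : ¬ Nat.Coprime p.1 p.2 := hcon p.1 p.2 (by omega) hpa.2 (by omega) hpb.2
    have hg0 : Nat.gcd p.1 p.2 ≠ 0 := by
      intro h
      rw [Nat.gcd_eq_zero_iff] at h
      omega
    have hgle1 : Nat.gcd p.1 p.2 ≤ p.1 := Nat.le_of_dvd (by omega) (Nat.gcd_dvd_left _ _)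
    have hgle2 : Nat.gcd p.1 p.2 ≤ p.2 := Nat.le_of_dvd (by omega) (Nat.gcd_dvd_right _ _)
    have hg1 : Nat.gcd p.1 p.2 ≠ 1 := hnc
    rw [Finset.mem_biUnion]
    refine ⟨Nat.gcd p.1 p.2, by rw [Finset.mem_Icc]; omega, ?_⟩
    rw [Finset.mem_product]
    constructor <;> rw [Finset.mem_filter, Finset.mem_Icc]
    · exact ⟨⟨by omega, hpa.2⟩, Nat.gcd_dvd_left _ _⟩
    · exact ⟨⟨by omega, hpb.2⟩, Nat.gcd_dvd_right _ _⟩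
  have hcount : k * k ≤ ∑ d ∈ Finset.Icc 2 μ, (k/d + 1) * (k/d + 1) := by
    calc k * k = (Finset.Icc (M-k+1) M ×ˢ Finset.Icc (m-k+1) m).card := by
          rw [Finset.card_product, Nat.card_Icc, Nat.card_Icc,
            show M + 1 - (M - k + 1) = k by omega, show m + 1 - (m - k + 1) = k by omega]
    _ ≤ _ := by
      refine le_trans (Finset.card_le_card hsub) ?_
      refine le_trans (Finset.card_biUnion_le) ?_
      apply Finset.sum_le_sum
      intro d hd
      rw [Finset.mem_Icc] at hd
      rw [Finset.card_product]
      have e1 : ({a ∈ Finset.Icc (M-k+1) M | d ∣ a} : Finset ℕ).card ≤ k/d + 1 := by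
        have := count_dvd_le (M-k) k d (by omega)
        rwa [show M - k + k = M by omega] at this
      have e2 : ({b ∈ Finset.Icc (m-k+1) m | d ∣ b} : Finset ℕ).card ≤ k/d + 1 := by
        have := count_dvd_le (m-k) k d (by omega)
        rwa [show m - k + k = m by omega] at this
      exact Nat.mul_le_mul e1 e2
  have hreal : (k:ℝ) * k ≤ ∑ d ∈ Finset.Icc 2 μ, ((k:ℝ)/d + 1)^2 := by
    calc (k:ℝ) * k ≤ (∑ d ∈ Finset.Icc 2 μ, ((k/d + 1) * (k/d + 1) : ℕ) : ℝ) := by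
          exact_mod_cast hcount
    _ ≤ _ := by
      push_cast
      apply Finset.sum_le_sum
      intro d hd
      rw [Finset.mem_Icc] at hd
      have hd0 : (0:ℝ) < d := by exact_mod_cast (by omega : 0 < d)
      have hdiv : ((k/d : ℕ) : ℝ) ≤ (k:ℝ)/d := by
        rw [le_div_iff₀ hd0]
        exact_mod_cast Nat.div_mul_le_self k d
      have h0 : (0:ℝ) ≤ ((k/d : ℕ) : ℝ) + 1 := by positivity
      nlinarith
  have hexp : ∑ d ∈ Finset.Icc 2 μ, ((k:ℝ)/d + 1)^2
      ≤ (k:ℝ)^2 * (3/4) + 2*(k:ℝ)*(2*Real.sqrt μ) + μ := by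
    have e : ∀ d ∈ Finset.Icc 2 μ, ((k:ℝ)/d + 1)^2
        = (k:ℝ)^2 * (1/(d:ℝ)^2) + 2*(k:ℝ)*(1/d) + 1 := by
      intro d hd
      rw [Finset.mem_Icc] at hd
      have hd0 : (d:ℝ) ≠ 0 := by
        have : 0 < d := by omega
        positivity
      field_simp
      ring
    rw [Finset.sum_congr rfl e, Finset.sum_add_distrib, Finset.sum_add_distrib,
      ← Finset.mul_sum, ← Finset.mul_sum]
    have s1 := sum_inv_sq_le μ
    have s2 : ∑ d ∈ Finset.Icc 2 μ, (1:ℝ)/d ≤ 2 * Real.sqrt μ := by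
      refine le_trans ?_ (sum_inv_le_two_sqrt μ)
      apply Finset.sum_le_sum_of_subset_of_nonneg
      · apply Finset.Icc_subset_Icc_left; omega
      · intro i _ _; positivity
    have s3 : (∑ _d ∈ Finset.Icc 2 μ, (1:ℝ)) ≤ μ := by
      rw [Finset.sum_const, Nat.card_Icc]
      have h1 : μ + 1 - 2 ≤ μ := by omega
      have h2 : ((μ + 1 - 2 : ℕ):ℝ) ≤ (μ:ℝ) := by exact_mod_cast h1
      simpa using h2
    have t1 := mul_le_mul_of_nonneg_left s1 (by positivity : (0:ℝ) ≤ (k:ℝ)^2)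
    have t2 := mul_le_mul_of_nonneg_left s2 (by positivity : (0:ℝ) ≤ 2*(k:ℝ))
    linarith
  have hkk : (k:ℝ) * k = (k:ℝ)^2 := by ring
  linarith

theorem davenport_Icc_asymptotic :
    ∀ ε : ℝ, 0 < ε → ∃ N : ℕ, ∀ m M : ℕ, 0 < m → 0 < M → N ≤ min m M →
      ((M + m : ℝ) - ε * (min m M : ℕ) ≤
        (((davenport (Set.Icc (-(m : ℤ)) M)).toNat : ℕ) : ℝ)) ∧
      davenport (Set.Icc (-(m : ℤ)) M) ≤ ((M + m : ℕ) : ℕ∞) := by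
  intro ε hε
  set c : ℝ := min ε 1 / 4 with hc
  have hc0 : 0 < c := by
    rw [hc]
    have : 0 < min ε 1 := lt_min hε one_pos
    positivity
  have hc1 : c ≤ 1/4 := by
    rw [hc]
    have : min ε 1 ≤ 1 := min_le_right _ _
    linarith
  clear_value c
  refine ⟨⌈(32/c)^2 + 8/c^2⌉₊ + 2, ?_⟩
  intro m M hm hM hN
  set μ := min m M with hμ
  clear_value μ
  set X := Set.Icc (-(m:ℤ)) (M:ℤ) with hX
  clear_value X
  -- the upper bound
  have hub : davenport X ≤ ((M + m : ℕ) : ℕ∞) := by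
    refine iSup₂_le ?_
    intro s hs
    rw [hX] at hs
    exact_mod_cast card_le_of_min m M hm hM s hs
  refine ⟨?_, hub⟩
  -- basic numeric facts
  have hμR : ((32:ℝ)/c)^2 + 8/c^2 + 2 ≤ (μ:ℝ) := by
    have h1 : (⌈(32/c)^2 + 8/c^2⌉₊ + 2 : ℕ) ≤ μ := hN
    have h2 : ((32:ℝ)/c)^2 + 8/c^2 ≤ (⌈(32/c)^2 + 8/c^2⌉₊ : ℝ) := Nat.le_ceil _
    have h3 : ((⌈(32/c)^2 + 8/c^2⌉₊ + 2 : ℕ) : ℝ) ≤ (μ:ℝ) := by exact_mod_cast h1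
    push_cast at h3
    linarith
  have hμpos : (0:ℝ) < μ := by
    have : (0:ℝ) ≤ ((32:ℝ)/c)^2 + 8/c^2 := by positivity
    linarith
  set k := ⌈c * (μ:ℝ)⌉₊ with hk
  have hk_lb : c * μ ≤ (k:ℝ) := Nat.le_ceil _
  have hk_ub : (k:ℝ) < c * μ + 1 := Nat.ceil_lt_add_one (by positivity)
  have hkpos : 0 < k := by
    rw [hk, Nat.lt_ceil]
    push_cast
    positivity
  clear_value k
  have h8pos : (0:ℝ) < 8/c^2 := by positivity
  have h32sq : (0:ℝ) ≤ (32/c)^2 := sq_nonneg _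
  have hkμ : k ≤ μ := by
    have h2 : (2:ℝ) ≤ μ := by linarith
    have hq := mul_le_mul_of_nonneg_right hc1 (le_of_lt hμpos)
    have : (k:ℝ) ≤ (μ:ℝ) := by linarith
    exact_mod_cast this
  have hkm : k ≤ m := le_trans hkμ (by rw [hμ]; exact min_le_left _ _)
  have hkM : k ≤ M := le_trans hkμ (by rw [hμ]; exact min_le_right _ _)
  have hk0 : (0:ℝ) < k := by exact_mod_cast hkpos
  -- the key inequality
  have hsq : Real.sqrt μ * Real.sqrt μ = (μ:ℝ) := Real.mul_self_sqrt (by positivity)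
  have hsqrt_gt : 32/c < Real.sqrt μ := by
    rw [show (32:ℝ)/c = Real.sqrt ((32/c)^2) by
      rw [Real.sqrt_sq (by positivity)]]
    apply Real.sqrt_lt_sqrt (by positivity)
    linarith
  have hsqrt_pos : 0 < Real.sqrt μ := by
    have : (0:ℝ) < 32/c := by positivity
    linarith
  have hbig : 16*(k:ℝ)*Real.sqrt μ + 4*(μ:ℝ) < (k:ℝ)^2 := by
    have e1 : (32:ℝ) < c * Real.sqrt μ := by
      rw [div_lt_iff₀ hc0] at hsqrt_gt
      linarith
    have h1 : 32 * Real.sqrt μ < c * (μ:ℝ) := by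
      have := mul_lt_mul_of_pos_right e1 hsqrt_pos
      rw [mul_assoc, hsq] at this
      linarith
    have e2 : 32 * Real.sqrt μ < (k:ℝ) := lt_of_lt_of_le h1 hk_lb
    have h2 : 16*(k:ℝ)*Real.sqrt μ < (k:ℝ)^2/2 := by
      have p := mul_lt_mul_of_pos_right e2 hk0
      have pk : (k:ℝ)*(k:ℝ) = (k:ℝ)^2 := by ring
      linarith
    have e3 : 8/c^2 ≤ (μ:ℝ) := by linarith
    have e4 : (8:ℝ) ≤ c^2*μ := by
      rw [div_le_iff₀ (pow_pos hc0 2)] at e3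
      linarith
    have e5 : 8*(μ:ℝ) ≤ c^2*(μ:ℝ)^2 := by
      have p := mul_le_mul_of_nonneg_right e4 (le_of_lt hμpos)
      have pe : c^2*(μ:ℝ)*(μ:ℝ) = c^2*(μ:ℝ)^2 := by ring
      linarith
    have e6 : c*(μ:ℝ)*(c*(μ:ℝ)) ≤ (k:ℝ)*(k:ℝ) :=
      mul_le_mul hk_lb hk_lb (by positivity) (by positivity)
    have h3 : 4*(μ:ℝ) ≤ (k:ℝ)^2/2 := by
      have q1 : c*(μ:ℝ)*(c*(μ:ℝ)) = c^2*(μ:ℝ)^2 := by ring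
      have q2 : (k:ℝ)*(k:ℝ) = (k:ℝ)^2 := by ring
      linarith
    linarith
  obtain ⟨a, b, hak, haM, hbk, hbm, hco⟩ := exists_coprime_pair m M k μ hμ hkm hkM hkpos hbig
  have ha1 : 1 ≤ a := by omega
  have hb1 : 1 ≤ b := by omega
  have hmin' := min_construction m M a b ha1 hb1 haM hbm hco
  rw [← hX] at hmin'
  -- lower bound on davenport
  have hlow : ((b + a : ℕ) : ℕ∞) ≤ davenport X := by
    have hcard : Multiset.card
        (Multiset.replicate b (a:ℤ) + Multiset.replicate a (-(b:ℤ))) = b + a := by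
      simp
    calc ((b + a : ℕ) : ℕ∞)
        = (Multiset.card (Multiset.replicate b (a:ℤ) + Multiset.replicate a (-(b:ℤ))) : ℕ∞) := by
          rw [hcard]
    _ ≤ _ := le_iSup₂ (f := fun (s : Multiset ℤ) (_ : IsMinZeroSumSeq X s) =>
          (Multiset.card s : ℕ∞)) _ hmin'
  have hDne : davenport X ≠ ⊤ := by
    intro h
    rw [h] at hub
    exact (ENat.coe_ne_top _) (top_le_iff.mp hub)
  have hnat : b + a ≤ (davenport X).toNat := by
    have := ENat.toNat_le_toNat hlow hDne
    simpa only [ENat.toNat_coe] using this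
  -- final real inequality
  have hreal : ((b + a : ℕ) : ℝ) ≤ (((davenport X).toNat : ℕ) : ℝ) := by exact_mod_cast hnat
  have haR : (M:ℝ) + 1 ≤ (a:ℝ) + k := by exact_mod_cast hak
  have hbR : (m:ℝ) + 1 ≤ (b:ℝ) + k := by exact_mod_cast hbk
  have h2c : 2*c ≤ ε := by
    rw [hc]
    have h1 : min ε 1 ≤ ε := min_le_left _ _
    linarith
  have hmul : 2*c*(μ:ℝ) ≤ ε*(μ:ℝ) := mul_le_mul_of_nonneg_right h2c (le_of_lt hμpos)
  push_cast at hreal haR hbR ⊢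
  linarith
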